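/- Let φ : K → L be a covering map of finite simplicial complexes (every simplex of L has preimage a disjoint union of simplices each mapped bijectively), with weight functions satisfying w_L(G) = Σ_{F : φ(F) = G} w_K(F) for every simplex G of L. Then the diagram φ* ∘ L^{up}_n(K) ∘ φ = L^{up}_n(L) commutes, where φ : C^n(L) → C^n(K) is the induced cochain map and φ* its adjoint with respect to the weighted inner products. -/

import Mathlib

/-- A finite abstract simplicial complex on vertex set `Fin m`:
a collection of nonempty finite vertex sets closed under taking nonempty subsets. -/
def IsComplex {m : ℕ} (K : Finset (Finset (Fin m))) : Prop :=
  (∀ s ∈ K, s.Nonempty) ∧ ∀ s ∈ K, ∀ t, t ⊆ s → t.Nonempty → t ∈ K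

/-- The `n`-dimensional faces (simplices with `n+1` vertices) of `K`. -/
def faces {m : ℕ} (K : Finset (Finset (Fin m))) (n : ℕ) : Finset (Finset (Fin m)) :=
  K.filter fun s => s.card = n + 1

/-- The incidence sign `(-1)^i` where `i` is the position of vertex `v` in the
canonically (increasingly) ordered vertex list of the simplex `s`. -/
def incSign {m : ℕ} (s : Finset (Fin m)) (v : Fin m) : ℝ :=
  (-1 : ℝ) ^ ((s.sort (· ≤ ·)).idxOf v)

/-- Simplicial coboundary with respect to canonical orientations:
`(δ f)([v₀,…,v_{n+1}]) = Σᵢ (-1)ⁱ f([v₀,…,v̂ᵢ,…,v_{n+1}])`. -/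
def coboundary {m : ℕ} (f : Finset (Fin m) → ℝ) (s : Finset (Fin m)) : ℝ :=
  ∑ v ∈ s, incSign s v * f (s.erase v)

/-- The weighted up-Laplacian `L^{up}_n = δ_n^* δ_n` on `n`-cochains, where the formal
adjoint `δ_n^*` is taken with respect to the weighted inner products
`(f,g) = Σ_F w(F) f(F) g(F)` and is extended by zero on simplices of weight zero. -/
noncomputable def upLap {m : ℕ} (K : Finset (Finset (Fin m))) (w : Finset (Fin m) → ℝ) (n : ℕ)
    (f : Finset (Fin m) → ℝ) (F : Finset (Fin m)) : ℝ :=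
  if w F = 0 then 0 else
    (w F)⁻¹ * ∑ s ∈ (faces K (n + 1)).filter (fun s => F ⊆ s),
      w s * (∑ v ∈ s \ F, incSign s v) * coboundary f s

/-- `lam : Fin N → ℝ` is the non-decreasing enumeration (with multiplicity) of the
eigenvalues of the weighted up-Laplacian `L^{up}_n(K, w)` acting on `C^n(K, ℝ)`:
there is a linearly independent eigenbasis realizing these eigenvalues. -/
def eigenseq {m : ℕ} (K : Finset (Finset (Fin m))) (w : Finset (Fin m) → ℝ) (n : ℕ)
    {N : ℕ} (lam : Fin N → ℝ) : Prop :=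
  Monotone lam ∧ N = (faces K n).card ∧
    ∃ f : Fin N → (Finset (Fin m) → ℝ),
      LinearIndependent ℝ f ∧
      (∀ i F, F ∉ faces K n → f i F = 0) ∧
      (∀ i F, F ∈ faces K n → upLap K w n (f i) F = lam i * f i F)

/-- Extension of a finite eigenvalue sequence `lam : Fin N → ℝ` to integer indices,
by `lo` for indices `≤ 0` and by `hi` for indices `> N`. -/
def extSeq {N : ℕ} (lam : Fin N → ℝ) (lo hi : ℝ) (j : ℤ) : ℝ :=
  if h : 1 ≤ j ∧ j ≤ (N : ℤ) then lam ⟨(j - 1).toNat, by omega⟩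
  else if j ≤ 0 then lo else hi

/-- The orientation sign of the image of the simplex `F` under the vertex map `φ`,
with respect to canonical (increasing) orderings: `0` if the image is degenerate,
otherwise the sign of the permutation sorting the image list. -/
def mapSign {a b : ℕ} (φ : Fin a → Fin b) (F : Finset (Fin a)) : ℝ :=
  let l : List (Fin b) := (F.sort (· ≤ ·)).map φ
  if l.Nodup then
    (-1 : ℝ) ^ (Finset.univ.filter
      (fun p : Fin l.length × Fin l.length => p.1 < p.2 ∧ l.get p.2 < l.get p.1)).card
  else 0

/-- The cochain map induced by a vertex map `φ`:
`(φ g)([v₀,…,v_n]) = g([φ(v₀),…,φ(v_n)])` (zero on degenerate images). -/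
noncomputable def pullback {a b : ℕ} (φ : Fin a → Fin b) (g : Finset (Fin b) → ℝ)
    (F : Finset (Fin a)) : ℝ :=
  mapSign φ F * g (F.image φ)

/-- The formal adjoint `φ^*` of the induced cochain map with respect to the
weighted inner products on `C^n(K, w_K)` and `C^n(L, w_L)`. -/
noncomputable def pushforward {a b : ℕ} (φ : Fin a → Fin b) (K : Finset (Finset (Fin a)))
    (wK : Finset (Fin a) → ℝ) (wL : Finset (Fin b) → ℝ) (n : ℕ)
    (f : Finset (Fin a) → ℝ) (G : Finset (Fin b)) : ℝ :=
  if wL G = 0 then 0 else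
    (wL G)⁻¹ * ∑ F ∈ (faces K n).filter (fun F => F.image φ = G),
      wK F * mapSign φ F * f F

/-- `φ` is a simplicial covering map from `K` to `L`: it is simplicial, and the preimage of
every simplex of `L` is a (nonempty) union of pairwise disjoint simplices of `K`, each of
which is mapped bijectively onto it. -/
def IsCovering {a b : ℕ} (φ : Fin a → Fin b) (K : Finset (Finset (Fin a)))
    (L : Finset (Finset (Fin b))) : Prop :=
  (∀ s ∈ K, s.image φ ∈ L) ∧
  ∀ G ∈ L, (∃ F ∈ K, F.image φ = G) ∧
    (∀ F ∈ K, F.image φ = G → F.card = G.card) ∧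
    ∀ F ∈ K, ∀ F' ∈ K, F.image φ = G → F'.image φ = G → F ≠ F' → Disjoint F F'

/-- The strong covering condition in dimension `n`: for every `(n+1)`-simplex `Gb` of `L`
with facet `G`, and every `F` in the fiber over `G`, there is an `(n+1)`-simplex `Fb` of
`K` containing `F` with `φ(Fb) = Gb`. -/
def StrongAt {a b : ℕ} (φ : Fin a → Fin b) (K : Finset (Finset (Fin a)))
    (L : Finset (Finset (Fin b))) (n : ℕ) : Prop :=
  ∀ Gb ∈ faces L (n + 1), ∀ G ∈ faces L n, G ⊆ Gb →
    ∀ F ∈ faces K n, F.image φ = G →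
      ∃ Fb ∈ faces K (n + 1), F ⊆ Fb ∧ Fb.image φ = Gb

/-- `L` is `(n+1)`-path connected: any two `(n+1)`-simplices are joined by a chain of
`(n+1)`-simplices in which consecutive ones are `n`-down neighbours (share an `n`-face). -/
def UpConn {b : ℕ} (L : Finset (Finset (Fin b))) (n : ℕ) : Prop :=
  ∀ s ∈ faces L (n + 1), ∀ t ∈ faces L (n + 1),
    Relation.ReflTransGen (fun x y => y ∈ faces L (n + 1) ∧ (x ∩ y).card = n + 1) s t

/-- `μ` is an eigenvalue of the weighted up-Laplacian `L^{up}_n(K, w)`. -/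
def IsUpEig {m : ℕ} (K : Finset (Finset (Fin m))) (w : Finset (Fin m) → ℝ) (n : ℕ)
    (μ : ℝ) : Prop :=
  ∃ g : Finset (Fin m) → ℝ, g ≠ 0 ∧ (∀ F, F ∉ faces K n → g F = 0) ∧
    ∀ F ∈ faces K n, upLap K w n g F = μ * g F

/-- The normalizing weight function: weight `1` on `(n+1)`-simplices and the degree
(number of `(n+1)`-cofaces) on lower simplices. -/
def normWeight {m : ℕ} (K : Finset (Finset (Fin m))) (n : ℕ) (F : Finset (Fin m)) : ℝ :=
  if F.card = n + 2 then 1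
  else (((faces K (n + 1)).filter fun s => F ⊆ s).card : ℝ)


section Aux

lemma indexOf_sorted {m : ℕ} :
    ∀ (l : List (Fin m)), l.Pairwise (· < ·) → ∀ v ∈ l,
      l.idxOf v = l.countP (fun x => decide (x < v))
  | [], _, v, hv => by simp at hv
  | a :: t, hs, v, hv => by
    rcases List.pairwise_cons.mp hs with ⟨ha, ht⟩
    rw [List.idxOf_cons, List.countP_cons]
    rcases eq_or_ne v a with rfl | hne
    · simp only [beq_self_eq_true, cond_true]
      have : t.countP (fun x => decide (x < v)) = 0 := by
        rw [List.countP_eq_zero]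
        intro x hx
        simpa using not_lt.mpr (ha x hx).le
      simp [this]
    · have hvt : v ∈ t := by
        rcases List.mem_cons.mp hv with h | h
        · exact absurd h hne
        · exact h
      have hba : (a == v) = false := by
        simp [Ne.symm hne]
      rw [hba]
      simp only [cond_false]
      rw [indexOf_sorted t ht v hvt]
      have : a < v := ha v hvt
      simp [this]

lemma countP_sort_eq_card_filter {m : ℕ} (s : Finset (Fin m)) (p : Fin m → Prop)
    [DecidablePred p] :
    (s.sort (· ≤ ·)).countP (fun x => decide (p x)) = (s.filter p).card := by
  rw [← Multiset.coe_countP, Finset.sort_eq, Multiset.countP_eq_card_filter]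
  rfl

def rk {m : ℕ} (s : Finset (Fin m)) (v : Fin m) : ℕ := (s.filter (· < v)).card

lemma incSign_eq {m : ℕ} (s : Finset (Fin m)) (v : Fin m) (hv : v ∈ s) :
    incSign s v = (-1 : ℝ) ^ (rk s v) := by
  rw [incSign, indexOf_sorted _ (Finset.sortedLT_sort s).pairwise v ((Finset.mem_sort _).mpr hv),
    countP_sort_eq_card_filter]
  rfl

lemma incSign_sq {m : ℕ} (s : Finset (Fin m)) (v : Fin m) :
    incSign s v * incSign s v = 1 := by
  rw [incSign, ← pow_add, ← two_mul, pow_mul, neg_one_sq, one_pow]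

def invC {a b : ℕ} (φ : Fin a → Fin b) (s : Finset (Fin a)) : ℕ :=
  ((s ×ˢ s).filter (fun p => p.1 < p.2 ∧ φ p.2 < φ p.1)).card

lemma invCount_eq {a b : ℕ} (φ : Fin a → Fin b) (s : Finset (Fin a)) :
    (Finset.univ.filter
      (fun p : Fin ((s.sort (· ≤ ·)).map φ).length × Fin ((s.sort (· ≤ ·)).map φ).length =>
       p.1 < p.2 ∧ ((s.sort (· ≤ ·)).map φ).get p.2 < ((s.sort (· ≤ ·)).map φ).get p.1)).card
    = invC φ s := by
  set l := s.sort (· ≤ ·) with hl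
  have hlen : (l.map φ).length = l.length := List.length_map _
  have strict : l.Pairwise (· < ·) := (Finset.sortedLT_sort s).pairwise
  have getmono : StrictMono l.get := List.SortedLT.strictMono_get strict.sortedLT
  have hget : ∀ (p : Fin (l.map φ).length), (l.map φ).get p = φ (l.get (p.cast hlen)) := by
    intro p
    simp [List.get_eq_getElem, List.getElem_map]
  have hmem : ∀ (p : Fin l.length), l.get p ∈ s := by
    intro p
    exact (Finset.mem_sort _).mp (l.get_mem p)
  apply Finset.card_bij (fun p _ => (l.get (p.1.cast hlen), l.get (p.2.cast hlen)))
  · intro p hp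
    simp only [Finset.mem_filter, Finset.mem_univ, true_and] at hp
    simp only [Finset.mem_filter, Finset.mem_product]
    refine ⟨⟨hmem _, hmem _⟩, getmono (by exact hp.1), ?_⟩
    have := hp.2
    rwa [hget p.1, hget p.2] at this
  · intro p hp q hq h
    have h1 := congrArg Prod.fst h
    have h2 := congrArg Prod.snd h
    simp only at h1 h2
    have e1 := getmono.injective h1
    have e2 := getmono.injective h2
    have e1' : p.1 = q.1 := Fin.ext (by simpa using congrArg Fin.val e1)
    have e2' : p.2 = q.2 := Fin.ext (by simpa using congrArg Fin.val e2)
    exact Prod.ext e1' e2'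
  · intro q hq
    simp only [Finset.mem_filter, Finset.mem_product] at hq
    obtain ⟨⟨h1, h2⟩, hlt, hφ⟩ := hq
    obtain ⟨i, hi⟩ := List.mem_iff_get.mp ((Finset.mem_sort (α := Fin a) (· ≤ ·)).mpr h1)
    obtain ⟨j, hj⟩ := List.mem_iff_get.mp ((Finset.mem_sort (α := Fin a) (· ≤ ·)).mpr h2)
    refine ⟨(i.cast hlen.symm, j.cast hlen.symm), ?_, ?_⟩
    · simp only [Finset.mem_filter, Finset.mem_univ, true_and]
      constructor
      · have : l.get i < l.get j := by rw [hi, hj]; exact hlt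
        have := getmono.lt_iff_lt.mp this
        exact this
      · rw [hget, hget]
        simp only [Fin.cast_cast, Fin.cast_eq_self]
        rw [hi, hj]
        exact hφ
    · simp only [Fin.cast_cast, Fin.cast_eq_self]
      rw [hi, hj]

lemma nodup_iff_injOn {a b : ℕ} (φ : Fin a → Fin b) (s : Finset (Fin a)) :
    ((s.sort (· ≤ ·)).map φ).Nodup ↔ Set.InjOn φ ↑s := by
  rw [List.nodup_map_iff_inj_on (Finset.sort_nodup _ _)]
  constructor
  · intro h x hx y hy
    exact h x ((Finset.mem_sort _).mpr hx) y ((Finset.mem_sort _).mpr hy)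
  · intro h x hx y hy
    exact h ((Finset.mem_sort _).mp hx) ((Finset.mem_sort _).mp hy)

lemma mapSign_eq_of_injOn {a b : ℕ} (φ : Fin a → Fin b) (s : Finset (Fin a))
    (h : Set.InjOn φ ↑s) : mapSign φ s = (-1 : ℝ) ^ (invC φ s) := by
  rw [mapSign, if_pos ((nodup_iff_injOn φ s).mpr h), invCount_eq]

lemma mapSign_mul_self {a b : ℕ} (φ : Fin a → Fin b) (s : Finset (Fin a))
    (h : Set.InjOn φ ↑s) : mapSign φ s * mapSign φ s = 1 := by
  rw [mapSign_eq_of_injOn φ s h, ← pow_add, ← two_mul, pow_mul, neg_one_sq, one_pow]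

lemma erase_image_injOn {a b : ℕ} (φ : Fin a → Fin b) {s : Finset (Fin a)}
    (hinj : Set.InjOn φ ↑s) {v : Fin a} (hv : v ∈ s) :
    (s.erase v).image φ = (s.image φ).erase (φ v) := by
  ext y
  simp only [Finset.mem_image, Finset.mem_erase]
  constructor
  · rintro ⟨x, ⟨hxv, hxs⟩, rfl⟩
    exact ⟨fun h => hxv (hinj hxs hv h), x, hxs, rfl⟩
  · rintro ⟨hy, x, hxs, rfl⟩
    exact ⟨x, ⟨fun h => hy (by rw [h]), hxs⟩, rfl⟩

def rkA {a b : ℕ} (φ : Fin a → Fin b) (s : Finset (Fin a)) (v : Fin a) : ℕ :=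
  (s.filter (fun x => x < v ∧ φ v < φ x)).card
def rkB {a b : ℕ} (φ : Fin a → Fin b) (s : Finset (Fin a)) (v : Fin a) : ℕ :=
  (s.filter (fun x => v < x ∧ φ x < φ v)).card
def rkC {a b : ℕ} (φ : Fin a → Fin b) (s : Finset (Fin a)) (v : Fin a) : ℕ :=
  (s.filter (fun x => x < v ∧ φ x < φ v)).card


lemma rk_split {a b : ℕ} (φ : Fin a → Fin b) {s : Finset (Fin a)}
    (hinj : Set.InjOn φ ↑s) {v : Fin a} (hv : v ∈ s) :
    (s.filter (· < v)).card = rkA φ s v + rkC φ s v := by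
  rw [rkA, rkC]
  have key : ∀ x ∈ s, ((· < v) x ↔ (x < v ∧ φ v < φ x) ∨ (x < v ∧ φ x < φ v)) := by
    intro x hx
    constructor
    · intro hlt
      have hne : φ x ≠ φ v := fun h => (ne_of_lt hlt) (hinj hx hv h)
      rcases lt_or_gt_of_ne hne with h | h
      · exact Or.inr ⟨hlt, h⟩
      · exact Or.inl ⟨hlt, h⟩
    · rintro (⟨h, _⟩ | ⟨h, _⟩) <;> exact h
  rw [Finset.filter_congr key, Finset.filter_or, Finset.card_union_of_disjoint]
  rw [Finset.disjoint_left]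
  rintro x hx hx'
  simp only [Finset.mem_filter] at hx hx'
  exact absurd (hx.2.2.trans hx'.2.2) (lt_irrefl _)

lemma rk_img_split {a b : ℕ} (φ : Fin a → Fin b) {s : Finset (Fin a)}
    (hinj : Set.InjOn φ ↑s) {v : Fin a} (hv : v ∈ s) :
    ((s.image φ).filter (· < φ v)).card = rkB φ s v + rkC φ s v := by
  rw [rkB, rkC]
  have h1 : (s.image φ).filter (· < φ v) = (s.filter (fun x => φ x < φ v)).image φ := by
    ext y
    simp only [Finset.mem_filter, Finset.mem_image]
    constructor
    · rintro ⟨⟨x, hx, rfl⟩, hy⟩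
      exact ⟨x, ⟨hx, hy⟩, rfl⟩
    · rintro ⟨x, ⟨hx, hy⟩, rfl⟩
      exact ⟨⟨x, hx, rfl⟩, hy⟩
  rw [h1, Finset.card_image_of_injOn (hinj.mono (by
    intro x hx
    simp only [Finset.coe_filter, Set.mem_setOf_eq] at hx
    exact hx.1))]
  have key : ∀ x ∈ s, ((fun x => φ x < φ v) x ↔ (v < x ∧ φ x < φ v) ∨ (x < v ∧ φ x < φ v)) := by
    intro x hx
    constructor
    · intro hlt
      have hne : x ≠ v := fun h => absurd (h ▸ hlt) (lt_irrefl _)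
      rcases lt_or_gt_of_ne hne with h | h
      · exact Or.inr ⟨h, hlt⟩
      · exact Or.inl ⟨h, hlt⟩
    · rintro (⟨_, h⟩ | ⟨_, h⟩) <;> exact h
  rw [Finset.filter_congr key, Finset.filter_or, Finset.card_union_of_disjoint]
  rw [Finset.disjoint_left]
  rintro x hx hx'
  simp only [Finset.mem_filter] at hx hx'
  exact absurd (hx.2.1.trans hx'.2.1) (lt_irrefl _)

lemma invC_split {a b : ℕ} (φ : Fin a → Fin b) {s : Finset (Fin a)} {v : Fin a} (hv : v ∈ s) :
    invC φ s = invC φ (s.erase v) + rkA φ s v + rkB φ s v := by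
  classical
  set Q : Fin a × Fin a → Prop := fun p => p.1 < p.2 ∧ φ p.2 < φ p.1 with hQ
  set P := (s ×ˢ s).filter Q with hP
  have h1 : (P.filter (fun p => p.1 = v)).card + (P.filter (fun p => ¬ p.1 = v)).card = P.card :=
    Finset.card_filter_add_card_filter_not _
  have h2 : ((P.filter (fun p => ¬ p.1 = v)).filter (fun p => p.2 = v)).card
      + ((P.filter (fun p => ¬ p.1 = v)).filter (fun p => ¬ p.2 = v)).card
      = (P.filter (fun p => ¬ p.1 = v)).card :=
    Finset.card_filter_add_card_filter_not _
  have hBc : (P.filter (fun p => p.1 = v)).card = rkB φ s v := by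
    rw [rkB]
    apply Finset.card_bij (fun p _ => p.2)
    · rintro p hp
      simp only [hP, hQ, Finset.mem_filter, Finset.mem_product] at hp
      obtain ⟨⟨⟨_, h2s⟩, hlt, hphi⟩, h1v⟩ := hp
      simp only [Finset.mem_filter]
      rw [h1v] at hlt hphi
      exact ⟨h2s, hlt, hphi⟩
    · rintro p hp q hq h
      simp only [hP, Finset.mem_filter] at hp hq
      exact Prod.ext (hp.2.trans hq.2.symm) h
    · rintro x hx
      simp only [Finset.mem_filter] at hx
      refine ⟨(v, x), ?_, rfl⟩
      exact Finset.mem_filter.mpr ⟨Finset.mem_filter.mpr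
        ⟨Finset.mem_product.mpr ⟨hv, hx.1⟩, ⟨hx.2.1, hx.2.2⟩⟩, rfl⟩
  have hAc : ((P.filter (fun p => ¬ p.1 = v)).filter (fun p => p.2 = v)).card = rkA φ s v := by
    rw [rkA]
    apply Finset.card_bij (fun p _ => p.1)
    · rintro p hp
      simp only [hP, hQ, Finset.mem_filter, Finset.mem_product] at hp
      obtain ⟨⟨⟨⟨h1s, _⟩, hlt, hphi⟩, _⟩, h2v⟩ := hp
      simp only [Finset.mem_filter]
      rw [h2v] at hlt hphi
      exact ⟨h1s, hlt, hphi⟩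
    · rintro p hp q hq h
      simp only [hP, Finset.mem_filter] at hp hq
      exact Prod.ext h (hp.2.trans hq.2.symm)
    · rintro x hx
      simp only [Finset.mem_filter] at hx
      refine ⟨(x, v), ?_, rfl⟩
      exact Finset.mem_filter.mpr ⟨Finset.mem_filter.mpr ⟨Finset.mem_filter.mpr
        ⟨Finset.mem_product.mpr ⟨hx.1, hv⟩, ⟨hx.2.1, hx.2.2⟩⟩, ne_of_lt hx.2.1⟩, rfl⟩
  have hEc : ((P.filter (fun p => ¬ p.1 = v)).filter (fun p => ¬ p.2 = v))
      = ((s.erase v) ×ˢ (s.erase v)).filter Q := by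
    ext p
    simp only [hP, Finset.mem_filter, Finset.mem_product, Finset.mem_erase]
    tauto
  have : invC φ s = P.card := rfl
  rw [this, ← h1, ← h2, hBc, hAc, hEc]
  have : invC φ (s.erase v) = (((s.erase v) ×ˢ (s.erase v)).filter Q).card := rfl
  rw [this]
  ring

lemma sign_key {a b : ℕ} (φ : Fin a → Fin b) {s : Finset (Fin a)} (hinj : Set.InjOn φ ↑s)
    {v : Fin a} (hv : v ∈ s) :
    incSign s v * mapSign φ (s.erase v) * incSign (s.image φ) (φ v) = mapSign φ s := by
  have hinj' : Set.InjOn φ ↑(s.erase v) := hinj.mono (by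
    intro x hx
    simp only [Finset.coe_erase, Set.mem_diff] at hx
    exact hx.1)
  rw [incSign_eq s v hv, incSign_eq _ _ (Finset.mem_image_of_mem φ hv),
      mapSign_eq_of_injOn φ _ hinj', mapSign_eq_of_injOn φ s hinj,
      ← pow_add, ← pow_add]
  have e1 : rk s v = rkA φ s v + rkC φ s v := rk_split φ hinj hv
  have e2 : rk (s.image φ) (φ v) = rkB φ s v + rkC φ s v := rk_img_split φ hinj hv
  have e3 : invC φ s = invC φ (s.erase v) + rkA φ s v + rkB φ s v := invC_split φ hv
  have hcount : rk s v + invC φ (s.erase v) + rk (s.image φ) (φ v)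
      = invC φ s + 2 * rkC φ s v := by omega
  rw [hcount, pow_add, pow_mul, neg_one_sq, one_pow, mul_one]

lemma sign_key' {a b : ℕ} (φ : Fin a → Fin b) {s : Finset (Fin a)} (hinj : Set.InjOn φ ↑s)
    {v : Fin a} (hv : v ∈ s) :
    incSign s v * mapSign φ (s.erase v)
      = mapSign φ s * incSign (s.image φ) (φ v) := by
  have h := sign_key φ hinj hv
  have hc := incSign_sq (s.image φ) (φ v)
  linear_combination incSign (s.image φ) (φ v) * h
    - incSign s v * mapSign φ (s.erase v) * hc

lemma pullback_coboundary {a b : ℕ} (φ : Fin a → Fin b) (g : Finset (Fin b) → ℝ)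
    {s : Finset (Fin a)} (hinj : Set.InjOn φ ↑s) :
    coboundary (pullback φ g) s = mapSign φ s * coboundary g (s.image φ) := by
  rw [coboundary, coboundary, Finset.mul_sum,
    Finset.sum_image (fun x hx y hy h => hinj hx hy h)]
  apply Finset.sum_congr rfl
  intro v hv
  rw [pullback, erase_image_injOn φ hinj hv, ← mul_assoc, sign_key' φ hinj hv, mul_assoc]

end Aux

lemma mul_inv_helper (x y S : ℝ) (hx : x ≠ 0) : x * y * (x⁻¹ * S) = y * S := by
  field_simp

def cfunAux {b : ℕ} (g : Finset (Fin b) → ℝ) (G t : Finset (Fin b)) : ℝ :=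
  (∑ w ∈ t \ G, incSign t w) * coboundary g t

/-- **Lemma 3.5: coverings intertwine Laplacians.** If `φ : K → L` is a covering map of
finite complexes and the weights satisfy `w_L(G) = Σ_{F : φ(F)=G} w_K(F)`, then
`φ^* ∘ L^{up}_n(K) ∘ φ = L^{up}_n(L)` on `n`-cochains. -/
theorem stmt_11 {a b n : ℕ} (K : Finset (Finset (Fin a))) (L : Finset (Finset (Fin b)))
    (hK : IsComplex K) (hL : IsComplex L)
    (φ : Fin a → Fin b) (hcov : IsCovering φ K L)
    (wK : Finset (Fin a) → ℝ) (wL : Finset (Fin b) → ℝ)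
    (hposK : ∀ s ∈ K, 0 < wK s)
    (hw : ∀ G ∈ L, wL G
        = ∑ F ∈ K.filter (fun F => F.image φ = G ∧ F.card = G.card), wK F)
    (g : Finset (Fin b) → ℝ) (G : Finset (Fin b)) (hG : G ∈ faces L n) :
    pushforward φ K wK wL n (fun F => upLap K wK n (pullback φ g) F) G
      = upLap L wL n g G := by
  classical
  have hGmem := Finset.mem_filter.mp hG
  have hGL : G ∈ L := hGmem.1
  have hGcard : G.card = n + 1 := hGmem.2
  have hKinj : ∀ s ∈ K, Set.InjOn φ ↑s := by
    intro s hs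
    have h1 : s.image φ ∈ L := hcov.1 s hs
    have h2 : s.card = (s.image φ).card := (hcov.2 _ h1).2.1 s hs rfl
    exact Finset.card_image_iff.mp h2.symm
  have hwLG : 0 < wL G := by
    rw [hw G hGL]
    apply Finset.sum_pos
    · intro F hF
      exact hposK F (Finset.mem_filter.mp hF).1
    · obtain ⟨F₀, hF₀K, hF₀⟩ := (hcov.2 G hGL).1
      exact ⟨F₀, Finset.mem_filter.mpr ⟨hF₀K, hF₀, (hcov.2 G hGL).2.1 F₀ hF₀K hF₀⟩⟩
  have hwLG' : wL G ≠ 0 := ne_of_gt hwLG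
  have bigeq : ∑ F ∈ (faces K n).filter (fun F => F.image φ = G),
        wK F * mapSign φ F * upLap K wK n (pullback φ g) F
      = ∑ t ∈ (faces L (n + 1)).filter (fun t => G ⊆ t),
        wL t * (∑ w ∈ t \ G, incSign t w) * coboundary g t := by
    have hstep1 : ∀ F ∈ (faces K n).filter (fun F => F.image φ = G),
        wK F * mapSign φ F * upLap K wK n (pullback φ g) F
        = ∑ s ∈ faces K (n + 1), if F ⊆ s then
            mapSign φ F * (wK s * (∑ v ∈ s \ F, incSign s v)
              * coboundary (pullback φ g) s) else 0 := by
      intro F hF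
      have hFK : F ∈ K := (Finset.mem_filter.mp (Finset.mem_filter.mp hF).1).1
      have hwF : wK F ≠ 0 := ne_of_gt (hposK F hFK)
      rw [upLap, if_neg hwF, ← Finset.sum_filter, ← Finset.mul_sum]
      exact mul_inv_helper _ _ _ hwF
    rw [Finset.sum_congr rfl hstep1, Finset.sum_comm]
    have hstep2 : ∀ s ∈ faces K (n + 1),
        (∑ F ∈ (faces K n).filter (fun F => F.image φ = G), if F ⊆ s then
            mapSign φ F * (wK s * (∑ v ∈ s \ F, incSign s v)
              * coboundary (pullback φ g) s) else 0)
        = if G ⊆ s.image φ then wK s * cfunAux g G (s.image φ) else 0 := by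
      intro s hs
      have hsK : s ∈ K := (Finset.mem_filter.mp hs).1
      have hscard : s.card = n + 2 := (Finset.mem_filter.mp hs).2
      have hsinj := hKinj s hsK
      by_cases hGs : G ⊆ s.image φ
      · rw [if_pos hGs]
        set F₀ := s.filter (fun x => φ x ∈ G) with hF₀def
        have hF₀s : F₀ ⊆ s := Finset.filter_subset _ _
        have hF₀img : F₀.image φ = G := by
          apply Finset.Subset.antisymm
          · intro y hy
            obtain ⟨x, hx, rfl⟩ := Finset.mem_image.mp hy
            exact (Finset.mem_filter.mp hx).2
          · intro y hy
            obtain ⟨x, hx, hxy⟩ := Finset.mem_image.mp (hGs hy)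
            exact Finset.mem_image.mpr
              ⟨x, Finset.mem_filter.mpr ⟨hx, by rw [hxy]; exact hy⟩, hxy⟩
        have hF₀card : F₀.card = n + 1 := by
          have h1 : (F₀.image φ).card = F₀.card :=
            Finset.card_image_of_injOn (hsinj.mono (Finset.coe_subset.mpr hF₀s))
          rw [hF₀img] at h1
          omega
        have hF₀K : F₀ ∈ K := hK.2 s hsK F₀ hF₀s (Finset.card_pos.mp (by omega))
        have hF₀A : F₀ ∈ (faces K n).filter (fun F => F.image φ = G) :=
          Finset.mem_filter.mpr ⟨Finset.mem_filter.mpr ⟨hF₀K, hF₀card⟩, hF₀img⟩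
        have huniq : ∀ F ∈ (faces K n).filter (fun F => F.image φ = G), F ⊆ s → F = F₀ := by
          intro F hFA hFs
          have hFimg : F.image φ = G := (Finset.mem_filter.mp hFA).2
          have hFcard : F.card = n + 1 :=
            (Finset.mem_filter.mp (Finset.mem_filter.mp hFA).1).2
          have hsub : F ⊆ F₀ := by
            intro x hx
            exact Finset.mem_filter.mpr ⟨hFs hx, hFimg ▸ Finset.mem_image_of_mem φ hx⟩
          exact Finset.eq_of_subset_of_card_le hsub (by omega)
        rw [Finset.sum_eq_single_of_mem F₀ hF₀A
          (fun F hFA hne => if_neg (fun hFs => hne (huniq F hFA hFs))), if_pos hF₀s]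
        obtain ⟨v, hv⟩ := Finset.card_eq_one.mp (show (s \ F₀).card = 1 by
          rw [Finset.card_sdiff_of_subset hF₀s]; omega)
        have hvs : v ∈ s := (Finset.mem_sdiff.mp (hv ▸ Finset.mem_singleton_self v)).1
        have hF₀e : F₀ = s.erase v := by
          rw [Finset.erase_eq, ← hv, Finset.sdiff_sdiff_self_left,
            Finset.inter_eq_right.mpr hF₀s]
        have himg : G = (s.image φ).erase (φ v) := by
          rw [← hF₀img, hF₀e, erase_image_injOn φ hsinj hvs]
        have hsd : s.image φ \ G = {φ v} := by
          rw [himg]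
          ext y
          constructor
          · intro hy
            rcases Finset.mem_sdiff.mp hy with ⟨h1, h2⟩
            rw [Finset.mem_singleton]
            by_contra hne
            exact h2 (Finset.mem_erase.mpr ⟨hne, h1⟩)
          · intro hy
            rw [Finset.mem_singleton] at hy
            subst hy
            exact Finset.mem_sdiff.mpr ⟨Finset.mem_image_of_mem φ hvs,
              fun h => (Finset.mem_erase.mp h).1 rfl⟩
        rw [cfunAux, hv, hsd, Finset.sum_singleton, Finset.sum_singleton,
          pullback_coboundary φ g hsinj, hF₀e]
        linear_combination (wK s * coboundary g (s.image φ) * mapSign φ s)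
            * (sign_key' φ hsinj hvs)
          + (wK s * coboundary g (s.image φ) * incSign (s.image φ) (φ v))
            * (mapSign_mul_self φ s hsinj)
      · rw [if_neg hGs]
        apply Finset.sum_eq_zero
        intro F hFA
        rw [if_neg]
        intro hFs
        have h1 : F.image φ ⊆ s.image φ := Finset.image_subset_image hFs
        rw [(Finset.mem_filter.mp hFA).2] at h1
        exact hGs h1
    rw [Finset.sum_congr rfl hstep2, ← Finset.sum_filter]
    have hmaps : ∀ s ∈ (faces K (n + 1)).filter (fun s => G ⊆ s.image φ),
        s.image φ ∈ (faces L (n + 1)).filter (fun t => G ⊆ t) := by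
      intro s hs'
      rcases Finset.mem_filter.mp hs' with ⟨hsf, hGs⟩
      rcases Finset.mem_filter.mp hsf with ⟨hsK, hscard⟩
      have himg : s.image φ ∈ L := hcov.1 s hsK
      have hcard : s.card = (s.image φ).card := (hcov.2 _ himg).2.1 s hsK rfl
      exact Finset.mem_filter.mpr ⟨Finset.mem_filter.mpr ⟨himg, by omega⟩, hGs⟩
    rw [← Finset.sum_fiberwise_of_maps_to hmaps (fun s => wK s * cfunAux g G (s.image φ))]
    apply Finset.sum_congr rfl
    intro t ht
    rcases Finset.mem_filter.mp ht with ⟨htf, hGt⟩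
    rcases Finset.mem_filter.mp htf with ⟨htL, htcard⟩
    have hfib : ((faces K (n + 1)).filter (fun s => G ⊆ s.image φ)).filter
          (fun s => s.image φ = t)
        = K.filter (fun F => F.image φ = t ∧ F.card = t.card) := by
      ext F
      simp only [Finset.mem_filter, faces]
      constructor
      · rintro ⟨⟨⟨hFK, hFc⟩, _⟩, hFt⟩
        exact ⟨hFK, hFt, by omega⟩
      · rintro ⟨hFK, hFt, hFc⟩
        exact ⟨⟨⟨hFK, by omega⟩, by rw [hFt]; exact hGt⟩, hFt⟩
    calc ∑ s ∈ ((faces K (n + 1)).filter (fun s => G ⊆ s.image φ)).filter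
            (fun s => s.image φ = t), wK s * cfunAux g G (s.image φ)
        = ∑ s ∈ ((faces K (n + 1)).filter (fun s => G ⊆ s.image φ)).filter
            (fun s => s.image φ = t), wK s * cfunAux g G t := by
          apply Finset.sum_congr rfl
          intro s hs
          rw [(Finset.mem_filter.mp hs).2]
      _ = (∑ s ∈ ((faces K (n + 1)).filter (fun s => G ⊆ s.image φ)).filter
            (fun s => s.image φ = t), wK s) * cfunAux g G t := by
          rw [Finset.sum_mul]
      _ = wL t * cfunAux g G t := by rw [hfib, ← hw t htL]
      _ = wL t * (∑ w ∈ t \ G, incSign t w) * coboundary g t := by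
          rw [cfunAux]; ring
  rw [pushforward, upLap, if_neg hwLG', if_neg hwLG']
  exact congrArg (HMul.hMul (wL G)⁻¹) bigeq
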